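/- Let d ≥ 2, let A be a finite set with |A| = d, and let π_t, π_b : A → {1,…,d} be bijections whose monodromy satisfies π_b(π_t⁻¹(1)) = d and π_b(π_t⁻¹(k)) = k − 1 for all k = 2,…,d. Let β* = π_b⁻¹(d) and let Ω_π : ℝ^A → ℝ^A be the linear map with entries Ω_{α,β} = +1 if π_b(α) > π_b(β) and π_t(α) < π_t(β); −1 if π_b(α) < π_b(β) and π_t(α) > π_t(β); 0 otherwise. Then, with respect to the standard inner product on ℝ^A, the orthogonal complement of ker(Ω_π) is the two-dimensional subspace spanned by the standard basis vector e_{β*} and the vector ∑_{δ ≠ β*} e_δ. -/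

import Mathlib

open Matrix

/-- For a combinatorial datum `π = (πt, πb)` of standard rotation form on an alphabet
`A` of cardinality `d ≥ 2`, the orthogonal complement (in `ℝ^A` with its standard
inner product) of the kernel of the translation matrix `Ω_π` is the two-dimensional
subspace spanned by the basis vector `e_{β*}` and the vector `∑_{δ ≠ β*} e_δ`. -/
theorem orth_ker_translation_matrix_rotation_type
    {A : Type*} [Fintype A] [DecidableEq A] (d : ℕ) (hd : 2 ≤ d)
    (hcard : Fintype.card A = d)
    (πt πb : A ≃ Fin d)
    (hrot1 : (πb (πt.symm ⟨0, by omega⟩) : ℕ) = d - 1)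
    (hrot2 : ∀ k : Fin d, (k : ℕ) ≠ 0 → (πb (πt.symm k) : ℕ) = (k : ℕ) - 1)
    (βs : A) (hβs : (πb βs : ℕ) = d - 1)
    (Ω : Matrix A A ℝ)
    (hΩ : ∀ α β : A, Ω α β =
      if πb β < πb α ∧ πt α < πt β then 1
      else if πb α < πb β ∧ πt β < πt α then -1 else 0) :
    (LinearMap.ker (Matrix.toEuclideanLin Ω))ᗮ =
      Submodule.span ℝ
        {EuclideanSpace.single βs (1 : ℝ),
         (WithLp.equiv 2 (A → ℝ)).symm (fun δ => if δ = βs then 0 else 1)} ∧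
    Module.finrank ℝ ((LinearMap.ker (Matrix.toEuclideanLin Ω))ᗮ : Submodule ℝ (EuclideanSpace ℝ A)) = 2 := by
  obtain ⟨u, hu⟩ : ∃ u : EuclideanSpace ℝ A, u = EuclideanSpace.single βs (1 : ℝ) := ⟨_, rfl⟩
  obtain ⟨v, hv⟩ : ∃ v : EuclideanSpace ℝ A,
      v = (WithLp.equiv 2 (A → ℝ)).symm (fun δ => if δ = βs then 0 else 1) := ⟨_, rfl⟩
  rw [← hu, ← hv]
  have huapp : ∀ δ : A, u δ = if δ = βs then (1:ℝ) else 0 := by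
    intro δ; simp [hu, EuclideanSpace.single_apply]
  have hvapp : ∀ δ : A, v δ = if δ = βs then (0:ℝ) else 1 := by
    intro δ; rw [hv]; rfl
  have hβs_iff : ∀ γ : A, (πb γ : ℕ) = d - 1 ↔ γ = βs := by
    intro γ
    constructor
    · intro h
      have : πb γ = πb βs := Fin.ext (by omega)
      exact πb.injective this
    · rintro rfl; exact hβs
  have hπtβs : (πt βs : ℕ) = 0 := by
    by_contra h
    have h2 := hrot2 (πt βs) h
    rw [Equiv.symm_apply_apply] at h2
    have := (πt βs).isLt
    omega
  have hπt_ne : ∀ γ : A, γ ≠ βs → (πt γ : ℕ) = (πb γ : ℕ) + 1 := by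
    intro γ hγ
    have h0 : (πt γ : ℕ) ≠ 0 := by
      intro h
      have : πt γ = πt βs := Fin.ext (by omega)
      exact hγ (πt.injective this)
    have h2 := hrot2 (πt γ) h0
    rw [Equiv.symm_apply_apply] at h2
    have hlt : (πb γ : ℕ) < d - 1 := by
      have := (πb γ).isLt
      have hne := (hβs_iff γ).not.mpr hγ
      omega
    omega
  -- the explicit form of Ω
  have hΩ' : ∀ α β : A, Ω α β =
      if α = βs ∧ β ≠ βs then 1 else if β = βs ∧ α ≠ βs then -1 else 0 := by
    intro α β
    rw [hΩ]
    by_cases hα : α = βs <;> by_cases hβ : β = βs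
    · have hab : α = β := hα.trans hβ.symm
      rw [hab]
      simp [lt_irrefl, hβ]
    · have hπbα : (πb α : ℕ) = d - 1 := (hβs_iff α).mpr hα
      have hπtα : (πt α : ℕ) = 0 := by rw [hα]; exact hπtβs
      have h1 : πb β < πb α := by
        rw [Fin.lt_def]
        have := (πb β).isLt
        have := (hβs_iff β).not.mpr hβ
        omega
      have h2 : πt α < πt β := by
        rw [Fin.lt_def]
        have := hπt_ne β hβ
        omega
      rw [if_pos ⟨h1, h2⟩, if_pos ⟨hα, hβ⟩]
    · have hπbβ : (πb β : ℕ) = d - 1 := (hβs_iff β).mpr hβ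
      have hπtβ : (πt β : ℕ) = 0 := by rw [hβ]; exact hπtβs
      have h1 : πb α < πb β := by
        rw [Fin.lt_def]
        have := (πb α).isLt
        have := (hβs_iff α).not.mpr hα
        omega
      have h2 : πt β < πt α := by
        rw [Fin.lt_def]
        have := hπt_ne α hα
        omega
      have h3 : ¬ (πb β < πb α ∧ πt α < πt β) := fun hc => (by rw [Fin.lt_def] at hc ⊢; omega : ¬ πb β < πb α) hc.1
      have h4 : ¬ (α = βs ∧ β ≠ βs) := fun hc => hα hc.1
      rw [if_neg h3, if_pos ⟨h1, h2⟩, if_neg h4, if_pos ⟨hβ, hα⟩]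
    · have ha := hπt_ne α hα
      have hb := hπt_ne β hβ
      have h1 : ¬ (πb β < πb α ∧ πt α < πt β) := by
        rw [Fin.lt_def, Fin.lt_def]; omega
      have h2 : ¬ (πb α < πb β ∧ πt β < πt α) := by
        rw [Fin.lt_def, Fin.lt_def]; omega
      simp [h1, h2, hα, hβ]
  -- the kernel description
  have hker : ∀ x : EuclideanSpace ℝ A,
      x ∈ LinearMap.ker (Matrix.toEuclideanLin Ω) ↔
        x βs = 0 ∧ ∑ β : A, (if β = βs then (0:ℝ) else x β) = 0 := by
    intro x
    rw [LinearMap.mem_ker]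
    have hmul : ∀ α : A, (Ω *ᵥ (WithLp.equiv 2 (A → ℝ) x)) α =
        if α = βs then ∑ β : A, (if β = βs then (0:ℝ) else x β) else -(x βs) := by
      intro α
      rw [Matrix.mulVec, dotProduct]
      by_cases hα : α = βs
      · rw [if_pos hα]
        refine Finset.sum_congr rfl fun β _ => ?_
        rw [hΩ']
        by_cases hβ : β = βs <;>
          simp [hβ, hα, WithLp.equiv_apply]
      · rw [if_neg hα]
        rw [Finset.sum_eq_single βs]
        · rw [hΩ']
          simp [hα, WithLp.equiv_apply]
        · intro β _ hβ
          rw [hΩ']; simp [hβ, hα]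
        · simp
    constructor
    · intro h
      have hcomp : ∀ α : A, (Ω *ᵥ (WithLp.equiv 2 (A → ℝ) x)) α = 0 := by
        intro α
        have := congrFun (congrArg (WithLp.equiv 2 (A → ℝ)) h) α
        simpa [Matrix.toEuclideanLin_apply] using this
      obtain ⟨α₀, hα₀⟩ := Fintype.exists_ne_of_one_lt_card (by omega) βs
      constructor
      · have := hcomp α₀
        rw [hmul α₀, if_neg hα₀] at this
        linarith
      · have := hcomp βs
        rwa [hmul βs, if_pos rfl] at this
    · rintro ⟨h1, h2⟩
      rw [Matrix.toEuclideanLin_apply]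
      have : Ω *ᵥ (WithLp.equiv 2 (A → ℝ)) x = 0 := by
        funext α
        rw [hmul α]
        by_cases hα : α = βs <;> simp [hα, h1, h2]
      rw [show Ω *ᵥ x.ofLp = 0 from this]
      simp
  -- inner products with u and v
  have hinner_u : ∀ x : EuclideanSpace ℝ A, (inner ℝ u x : ℝ) = x βs := by
    intro x
    rw [PiLp.inner_apply]
    rw [Finset.sum_eq_single βs]
    · simp [huapp βs]
    · intro β _ hβ
      simp [huapp β, hβ]
    · simp
  have hinner_v : ∀ x : EuclideanSpace ℝ A,
      (inner ℝ v x : ℝ) = ∑ β : A, (if β = βs then (0:ℝ) else x β) := by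
    intro x
    rw [PiLp.inner_apply]
    refine Finset.sum_congr rfl fun β _ => ?_
    by_cases hβ : β = βs <;>
      simp [hvapp β, hvapp βs, hβ, RCLike.inner_apply]
  -- kernel = orthogonal of the span
  have hkS : LinearMap.ker (Matrix.toEuclideanLin Ω) = (Submodule.span ℝ {u, v})ᗮ := by
    ext x
    rw [hker, Submodule.mem_orthogonal]
    constructor
    · rintro ⟨h1, h2⟩ y hy
      induction hy using Submodule.span_induction with
      | mem y hy =>
        rcases hy with rfl | rfl
        · rw [hinner_u]; exact h1
        · rw [hinner_v]; exact h2
      | zero => simp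
      | add y z _ _ hy hz => rw [inner_add_left, hy, hz]; ring
      | smul c y _ hy => rw [real_inner_smul_left, hy]; ring
    · intro h
      constructor
      · have := h u (Submodule.subset_span (by simp))
        rwa [hinner_u] at this
      · have := h v (Submodule.subset_span (by simp))
        rwa [hinner_v] at this
  have horth : (LinearMap.ker (Matrix.toEuclideanLin Ω))ᗮ = Submodule.span ℝ {u, v} := by
    rw [hkS, Submodule.orthogonal_orthogonal]
  refine ⟨horth, ?_⟩
  rw [horth]
  -- linear independence
  have hinner_single : ∀ (γ : A) (x : EuclideanSpace ℝ A),
      (inner ℝ (EuclideanSpace.single γ (1:ℝ)) x : ℝ) = x γ := by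
    intro γ x
    rw [EuclideanSpace.inner_single_left]
    simp
  have hli : LinearIndependent ℝ ![u, v] := by
    rw [LinearIndependent.pair_iff]
    intro s t hst
    obtain ⟨α₀, hα₀⟩ := Fintype.exists_ne_of_one_lt_card (by omega) βs
    have e1 : (inner ℝ (EuclideanSpace.single βs (1:ℝ)) (s • u + t • v) : ℝ) = 0 := by
      rw [hst]; exact inner_zero_right _
    have e2 : (inner ℝ (EuclideanSpace.single α₀ (1:ℝ)) (s • u + t • v) : ℝ) = 0 := by
      rw [hst]; exact inner_zero_right _
    rw [inner_add_right, real_inner_smul_right, real_inner_smul_right,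
      hinner_single, hinner_single, huapp, hvapp] at e1
    rw [inner_add_right, real_inner_smul_right, real_inner_smul_right,
      hinner_single, hinner_single, huapp, hvapp] at e2
    simp [hα₀] at e1 e2
    exact ⟨e1, e2⟩
  have hrange : ({u, v} : Set (EuclideanSpace ℝ A)) = Set.range ![u, v] := by
    ext y
    simp [Fin.exists_fin_two, or_comm]
  rw [hrange, finrank_span_eq_card hli, Fintype.card_fin]
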